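/- If p ∈ P_bp(k,l) is a building partition, then p*p is a projective partition (symmetric and idempotent) with t(p*p) = l, and no loops are removed in the composition p*p. -/

import Mathlib

/-- A two-row partition with `k` upper and `l` lower points, encoded as the
equivalence relation whose classes are the blocks. -/
abbrev PP (k l : ℕ) := Setoid (Fin k ⊕ Fin l)

/-- The involution `p*` (turning `p` upside down). -/
def swapP {k l : ℕ} (p : PP k l) : PP l k := Setoid.comap Sum.swap p

/-- Disjoint union of two setoids. -/
def sumSetoid {α β : Type*} (s : Setoid α) (t : Setoid β) : Setoid (α ⊕ β) where
  r := Sum.LiftRel s.r t.r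
  iseqv := by
    refine ⟨fun x => ?_, fun {x y} h => ?_, fun {x y z} h1 h2 => ?_⟩
    · cases x with
      | inl a => exact Sum.LiftRel.inl (s.iseqv.refl a)
      | inr b => exact Sum.LiftRel.inr (t.iseqv.refl b)
    · cases h with
      | inl h => exact Sum.LiftRel.inl (s.iseqv.symm h)
      | inr h => exact Sum.LiftRel.inr (t.iseqv.symm h)
    · cases h1 with
      | inl h1 =>
        cases h2 with
        | inl h2 => exact Sum.LiftRel.inl (s.iseqv.trans h1 h2)
      | inr h1 =>
        cases h2 with
        | inr h2 => exact Sum.LiftRel.inr (t.iseqv.trans h1 h2)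

/-- Reindexing equivalence for the horizontal concatenation (tensor product). -/
def tensorEquiv (k l k' l' : ℕ) :
    (Fin (k + k') ⊕ Fin (l + l')) ≃ ((Fin k ⊕ Fin l) ⊕ (Fin k' ⊕ Fin l')) :=
  (Equiv.sumCongr finSumFinEquiv.symm finSumFinEquiv.symm).trans
    (Equiv.sumSumSumComm (Fin k) (Fin k') (Fin l) (Fin l'))

/-- Tensor product (horizontal concatenation) of partitions. -/
def tensorP {k l k' l' : ℕ} (p : PP k l) (q : PP k' l') : PP (k + k') (l + l') :=
  Setoid.comap (tensorEquiv k l k' l') (sumSetoid p q)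

/-- The relation on `k ⊔ l ⊔ m` points generated by `p` (upper part) and `q` (lower part). -/
def midRel {k l m : ℕ} (p : PP k l) (q : PP l m) :
    (Fin k ⊕ (Fin l ⊕ Fin m)) → (Fin k ⊕ (Fin l ⊕ Fin m)) → Prop := fun x y =>
  (∃ a b : Fin k ⊕ Fin l, p.r a b ∧ x = Sum.map id Sum.inl a ∧ y = Sum.map id Sum.inl b) ∨
  (∃ a b : Fin l ⊕ Fin m, q.r a b ∧ x = Sum.inr a ∧ y = Sum.inr b)

/-- The equivalence relation generated on `k ⊔ l ⊔ m` in the composition procedure. -/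
def bigS {k l m : ℕ} (p : PP k l) (q : PP l m) : Setoid (Fin k ⊕ (Fin l ⊕ Fin m)) :=
  Relation.EqvGen.setoid (midRel p q)

/-- `compP q p` is the vertical composition `qp` (apply `p : P(k,l)` first, then `q : P(l,m)`). -/
def compP {k l m : ℕ} (q : PP l m) (p : PP k l) : PP k m :=
  Setoid.comap (Sum.map id Sum.inr) (bigS p q)

/-- `rlP q p` : the number of closed loops removed in the composition `qp`,
i.e. the blocks of the generated relation consisting only of middle points. -/
noncomputable def rlP {k l m : ℕ} (q : PP l m) (p : PP k l) : ℕ :=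
  Nat.card {c : Quotient (bigS p q) //
    ∀ x, Quotient.mk (bigS p q) x = c → ∃ b : Fin l, x = Sum.inr (Sum.inl b)}

/-- `b(p)` : number of blocks. -/
noncomputable def bP {k l : ℕ} (p : PP k l) : ℕ := Nat.card (Quotient p)

/-- `t(p)` : number of through-blocks (blocks meeting both rows). -/
noncomputable def tP {k l : ℕ} (p : PP k l) : ℕ :=
  Nat.card {c : Quotient p // (∃ a : Fin k, Quotient.mk p (Sum.inl a) = c) ∧
    (∃ b : Fin l, Quotient.mk p (Sum.inr b) = c)}

/-- `β(p) = b(p) - t(p)` : number of non-through-blocks. -/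
noncomputable def betaP {k l : ℕ} (p : PP k l) : ℕ := bP p - tP p

/-- The identity partition `|^{⊗k}`. -/
def idP (k : ℕ) : PP k k := Setoid.ker (Sum.elim (fun i : Fin k => i) (fun i : Fin k => i))

/-- A pair partition: all blocks have size two. -/
def isPair {k l : ℕ} (p : PP k l) : Prop := ∀ x, Nat.card {y // p.r x y} = 2

/-- A through-partition: a pair partition each of whose blocks connects exactly one
upper point to exactly one lower point. -/
def isThrough {k : ℕ} (p : PP k k) : Prop :=
  isPair p ∧ (∀ a b : Fin k, p.r (Sum.inl a) (Sum.inl b) → a = b) ∧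
    (∀ a b : Fin k, p.r (Sum.inr a) (Sum.inr b) → a = b)

/-- A building partition. -/
def isBuilding {k l : ℕ} (p : PP k l) : Prop :=
  (∀ b b' : Fin l, p.r (Sum.inr b) (Sum.inr b') → b = b') ∧
  (∀ b : Fin l, ∃ a : Fin k, p.r (Sum.inl a) (Sum.inr b)) ∧
  (∀ b b' : Fin l, ∀ a a' : Fin k, b < b' →
    IsLeast {x : Fin k | p.r (Sum.inl x) (Sum.inr b)} a →
    IsLeast {x : Fin k | p.r (Sum.inl x) (Sum.inr b')} a' → a < a')

/-- A projective partition: symmetric and idempotent. -/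
def isProjective {k : ℕ} (p : PP k k) : Prop := swapP p = p ∧ compP p p = p

/-- Linear position of the points, reading the upper row left to right and then the
lower row right to left. -/
def posP (k l : ℕ) : Fin k ⊕ Fin l → ℕ :=
  Sum.elim (fun i => (i : ℕ)) (fun j => k + (l - 1 - (j : ℕ)))

/-- Noncrossing partitions. -/
def isNC {k l : ℕ} (p : PP k l) : Prop :=
  ¬ ∃ x1 x2 x3 x4 : Fin k ⊕ Fin l,
    posP k l x1 < posP k l x2 ∧ posP k l x2 < posP k l x3 ∧ posP k l x3 < posP k l x4 ∧
    p.r x1 x3 ∧ p.r x2 x4 ∧ ¬ p.r x1 x2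


section Aux

attribute [local instance] Classical.propDecidable

variable {k l m : ℕ}

lemma quotExact {α : Type*} {s : Setoid α} {a b : α}
    (h : Quotient.mk s a = Quotient.mk s b) : s.r a b := Quotient.exact h

lemma quotSound {α : Type*} {s : Setoid α} {a b : α} (h : s.r a b) :
    Quotient.mk s a = Quotient.mk s b := Quotient.sound h

/-- `v` is a through-class of `p`: it contains a lower point. -/
def thP (p : PP k l) (v : Quotient p) : Prop := ∃ b : Fin l, Quotient.mk p (Sum.inr b) = v

open Classical in
/-- Classifying map for the big relation of the composition `p* p`. -/
noncomputable def Fmap (p : PP k l) : (Fin k ⊕ (Fin l ⊕ Fin k)) → Quotient p × ℕ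
  | .inl a => (Quotient.mk p (.inl a), if thP p (Quotient.mk p (.inl a)) then 0 else 1)
  | .inr (.inl b) => (Quotient.mk p (.inr b), 0)
  | .inr (.inr a) => (Quotient.mk p (.inl a), if thP p (Quotient.mk p (.inl a)) then 0 else 2)

open Classical in
/-- Classifying map for `p* p` itself. -/
noncomputable def hmap (p : PP k l) : (Fin k ⊕ Fin k) → Quotient p × ℕ
  | .inl a => (Quotient.mk p (.inl a), if thP p (Quotient.mk p (.inl a)) then 0 else 1)
  | .inr a => (Quotient.mk p (.inl a), if thP p (Quotient.mk p (.inl a)) then 0 else 2)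

open Classical in
/-- Classifying map for the big relation of `(p* p)(p* p)`. -/
noncomputable def Gmap (p : PP k l) : (Fin k ⊕ (Fin k ⊕ Fin k)) → Quotient p × ℕ
  | .inl a => (Quotient.mk p (.inl a), if thP p (Quotient.mk p (.inl a)) then 0 else 1)
  | .inr (.inl a) => (Quotient.mk p (.inl a), if thP p (Quotient.mk p (.inl a)) then 0 else 3)
  | .inr (.inr a) => (Quotient.mk p (.inl a), if thP p (Quotient.mk p (.inl a)) then 0 else 2)

lemma gen_top (p : PP k l) (q : PP l m) {a b : Fin k ⊕ Fin l} (h : p.r a b) :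
    (bigS p q).r (Sum.map id Sum.inl a) (Sum.map id Sum.inl b) :=
  Relation.EqvGen.rel _ _ (Or.inl ⟨a, b, h, rfl, rfl⟩)

lemma gen_bot (p : PP k l) (q : PP l m) {a b : Fin l ⊕ Fin m} (h : q.r a b) :
    (bigS p q).r (Sum.inr a) (Sum.inr b) :=
  Relation.EqvGen.rel _ _ (Or.inr ⟨a, b, h, rfl, rfl⟩)

lemma Fmap_inl_of_th (p : PP k l) {a : Fin k} {b : Fin l} (h : p.r (.inl a) (.inr b)) :
    Fmap p (.inl a) = (Quotient.mk p (.inl a), 0) := by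
  have hth : thP p (Quotient.mk p (.inl a)) := ⟨b, quotSound (p.iseqv.symm h)⟩
  show (Quotient.mk p (Sum.inl a),
    if thP p (Quotient.mk p (Sum.inl a)) then 0 else 1) = _
  rw [if_pos hth]

lemma Fmap_inrr_of_th (p : PP k l) {a : Fin k} {b : Fin l} (h : p.r (.inl a) (.inr b)) :
    Fmap p (.inr (.inr a)) = (Quotient.mk p (.inl a), 0) := by
  have hth : thP p (Quotient.mk p (.inl a)) := ⟨b, quotSound (p.iseqv.symm h)⟩
  show (Quotient.mk p (Sum.inl a),
    if thP p (Quotient.mk p (Sum.inl a)) then 0 else 2) = _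
  rw [if_pos hth]

lemma Fmap_fst (p : PP k l) :
    ∀ x, (Fmap p x).1 = Quotient.mk p (Sum.elim Sum.inl (Sum.elim Sum.inr Sum.inl) x)
  | .inl _ => rfl
  | .inr (.inl _) => rfl
  | .inr (.inr _) => rfl

/-- The big relation of the composition `p* p` is the kernel of `Fmap`. -/
lemma bigS_swap_eq (p : PP k l) : bigS p (swapP p) = Setoid.ker (Fmap p) := by
  apply Setoid.ext
  intro x y
  constructor
  · intro h
    induction h with
    | rel x y h =>
      show Fmap p x = Fmap p y
      rcases h with ⟨a, b, hab, hx, hy⟩ | ⟨a, b, hab, hx, hy⟩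
      · subst hx; subst hy
        rcases a with a1 | b1 <;> rcases b with a2 | b2
        · replace hab : p.r (.inl a1) (.inl a2) := hab
          show Fmap p (.inl a1) = Fmap p (.inl a2)
          have hq : Quotient.mk p (Sum.inl a1) = Quotient.mk p (Sum.inl a2) := quotSound hab
          show (Quotient.mk p (Sum.inl a1), if thP p (Quotient.mk p (Sum.inl a1)) then 0 else 1)
            = (Quotient.mk p (Sum.inl a2), if thP p (Quotient.mk p (Sum.inl a2)) then 0 else 1)
          rw [hq]
        · replace hab : p.r (.inl a1) (.inr b2) := hab
          show Fmap p (.inl a1) = Fmap p (.inr (.inl b2))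
          rw [Fmap_inl_of_th p hab]
          exact Prod.ext (quotSound hab) rfl
        · replace hab : p.r (.inr b1) (.inl a2) := hab
          show Fmap p (.inr (.inl b1)) = Fmap p (.inl a2)
          rw [Fmap_inl_of_th p (p.iseqv.symm hab)]
          exact Prod.ext (quotSound hab) rfl
        · replace hab : p.r (.inr b1) (.inr b2) := hab
          show Fmap p (.inr (.inl b1)) = Fmap p (.inr (.inl b2))
          exact Prod.ext (quotSound hab) rfl
      · subst hx; subst hy
        rcases a with b1 | a1 <;> rcases b with b2 | a2
        · replace hab : p.r (.inr b1) (.inr b2) := hab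
          exact Prod.ext (quotSound hab) rfl
        · replace hab : p.r (.inr b1) (.inl a2) := hab
          show Fmap p (.inr (.inl b1)) = Fmap p (.inr (.inr a2))
          rw [Fmap_inrr_of_th p (p.iseqv.symm hab)]
          exact Prod.ext (quotSound hab) rfl
        · replace hab : p.r (.inl a1) (.inr b2) := hab
          show Fmap p (.inr (.inr a1)) = Fmap p (.inr (.inl b2))
          rw [Fmap_inrr_of_th p hab]
          exact Prod.ext (quotSound hab) rfl
        · replace hab : p.r (.inl a1) (.inl a2) := hab
          show Fmap p (.inr (.inr a1)) = Fmap p (.inr (.inr a2))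
          have hq : Quotient.mk p (Sum.inl a1) = Quotient.mk p (Sum.inl a2) := quotSound hab
          show (Quotient.mk p (Sum.inl a1), if thP p (Quotient.mk p (Sum.inl a1)) then 0 else 2)
            = (Quotient.mk p (Sum.inl a2), if thP p (Quotient.mk p (Sum.inl a2)) then 0 else 2)
          rw [hq]
    | refl x => rfl
    | symm _ _ _ ih => exact ih.symm
    | trans _ _ _ _ _ ih1 ih2 => exact ih1.trans ih2
  · intro h
    replace h : Fmap p x = Fmap p y := h
    have key : ∀ (a : Fin k) (a' : Fin k),
        Fmap p (.inl a) = Fmap p (.inr (.inr a')) →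
        (bigS p (swapP p)).r (.inl a) (.inr (.inr a')) := by
      intro a a' h
      have h1 : Quotient.mk p (Sum.inl a) = Quotient.mk p (Sum.inl a') := by
        have := congrArg Prod.fst h; rw [Fmap_fst, Fmap_fst] at this; exact this
      have hth : thP p (Quotient.mk p (.inl a)) := by
        by_contra hth
        have hth' : ¬ thP p (Quotient.mk p (.inl a')) := h1 ▸ hth
        have h2 := congrArg Prod.snd h
        show False
        have e1 : (Fmap p (.inl a)).2 = 1 := by
          show (if thP p (Quotient.mk p (Sum.inl a)) then 0 else 1) = 1
          rw [if_neg hth]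
        have e2 : (Fmap p (.inr (.inr a'))).2 = 2 := by
          show (if thP p (Quotient.mk p (Sum.inl a')) then 0 else 2) = 2
          rw [if_neg hth']
        rw [e1, e2] at h2
        exact absurd h2 (by decide)
      obtain ⟨b, hb⟩ := hth
      have hab : p.r (.inl a) (.inr b) := p.iseqv.symm (quotExact hb)
      have hab' : (swapP p).r (.inl b) (.inr a') := quotExact (s := p) (hb.trans h1)
      exact (bigS p (swapP p)).iseqv.trans
        (gen_top p (swapP p) (a := .inl a) (b := .inr b) hab)
        (gen_bot p (swapP p) hab')
    have hfst := congrArg Prod.fst h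
    rw [Fmap_fst, Fmap_fst] at hfst
    rcases x with a | (b | a) <;> rcases y with a' | (b' | a')
    · exact gen_top p (swapP p) (a := .inl a) (b := .inl a') (quotExact hfst)
    · exact gen_top p (swapP p) (a := .inl a) (b := .inr b') (quotExact hfst)
    · exact key a a' h
    · exact (bigS p (swapP p)).iseqv.symm
        (gen_top p (swapP p) (a := .inl a') (b := .inr b) (quotExact hfst.symm))
    · exact gen_bot p (swapP p) (a := .inl b) (b := .inl b')
        (show p.r (.inr b) (.inr b') from quotExact hfst)
    · exact gen_bot p (swapP p) (a := .inl b) (b := .inr a')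
        (show p.r (.inr b) (.inl a') from quotExact hfst)
    · exact (bigS p (swapP p)).iseqv.symm (key a' a h.symm)
    · exact (bigS p (swapP p)).iseqv.symm (gen_bot p (swapP p) (a := .inl b') (b := .inr a)
        (show p.r (.inr b') (.inl a) from quotExact hfst.symm))
    · exact gen_bot p (swapP p) (a := .inr a) (b := .inr a')
        (show p.r (.inl a) (.inl a') from quotExact hfst)

/-- `p* p` is the kernel of `hmap`. -/
lemma comp_swap_eq (p : PP k l) : compP (swapP p) p = Setoid.ker (hmap p) := by
  apply Setoid.ext
  intro x y
  have key : ∀ z : Fin k ⊕ Fin k, Fmap p (Sum.map id Sum.inr z) = hmap p z := by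
    rintro (a | a) <;> rfl
  show (bigS p (swapP p)).r (Sum.map id Sum.inr x) (Sum.map id Sum.inr y) ↔ _
  rw [bigS_swap_eq p]
  show Fmap p (Sum.map id Sum.inr x) = Fmap p (Sum.map id Sum.inr y) ↔ hmap p x = hmap p y
  rw [key, key]

lemma pairc (p : PP k l) (v v' : Quotient p) (n : ℕ) (h : v = v') :
    ((v, if thP p v then 0 else n) : Quotient p × ℕ) = (v', if thP p v' then 0 else n) := by
  rw [h]

lemma pairth (p : PP k l) {v v' : Quotient p} (ht : thP p v) (h : v = v') (m n : ℕ) :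
    ((v, if thP p v then 0 else m) : Quotient p × ℕ)
      = (v', if thP p v' then 0 else n) := by
  subst h; rw [if_pos ht, if_pos ht]

lemma code_mix (p : PP k l) {v v' : Quotient p} {m n : ℕ} (hmn : m ≠ n) (hm : m ≠ 0)
    (hn : n ≠ 0)
    (h : ((v, if thP p v then 0 else m) : Quotient p × ℕ)
      = (v', if thP p v' then 0 else n)) :
    v = v' ∧ thP p v := by
  rw [Prod.mk.injEq] at h
  obtain ⟨h1, h2⟩ := h
  refine ⟨h1, ?_⟩
  by_contra ht
  have ht' : ¬ thP p v' := h1 ▸ ht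
  rw [if_neg ht, if_neg ht'] at h2
  exact hmn h2

lemma hmap_mix (p : PP k l) {a a' : Fin k} (h : hmap p (.inl a) = hmap p (.inr a')) :
    Quotient.mk p (.inl a) = Quotient.mk p (.inl a') ∧ thP p (Quotient.mk p (.inl a)) :=
  code_mix p (by decide) (by decide) (by decide) h

/-- The big relation of `(p* p)(p* p)` is the kernel of `Gmap`. -/
lemma bigS_hmap_eq (p : PP k l) :
    bigS (Setoid.ker (hmap p)) (Setoid.ker (hmap p)) = Setoid.ker (Gmap p) := by
  apply Setoid.ext
  intro x y
  constructor
  · intro h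
    induction h with
    | rel x y h =>
      show Gmap p x = Gmap p y
      rcases h with ⟨a, b, hab, hx, hy⟩ | ⟨a, b, hab, hx, hy⟩
      · subst hx; subst hy
        replace hab : hmap p a = hmap p b := hab
        rcases a with a1 | a1 <;> rcases b with b1 | b1
        · have h1 : Quotient.mk p (.inl a1) = Quotient.mk p (.inl b1) :=
            congrArg Prod.fst hab
          exact pairc p _ _ 1 h1
        · obtain ⟨h1, hth⟩ := hmap_mix p hab
          exact pairth p hth h1 1 3
        · obtain ⟨h1, hth⟩ := hmap_mix p hab.symm
          exact pairth p (h1 ▸ hth) h1.symm 3 1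
        · have h1 : Quotient.mk p (.inl a1) = Quotient.mk p (.inl b1) :=
            congrArg Prod.fst hab
          exact pairc p _ _ 3 h1
      · subst hx; subst hy
        replace hab : hmap p a = hmap p b := hab
        rcases a with a1 | a1 <;> rcases b with b1 | b1
        · have h1 : Quotient.mk p (.inl a1) = Quotient.mk p (.inl b1) :=
            congrArg Prod.fst hab
          exact pairc p _ _ 3 h1
        · obtain ⟨h1, hth⟩ := hmap_mix p hab
          exact pairth p hth h1 3 2
        · obtain ⟨h1, hth⟩ := hmap_mix p hab.symm
          exact pairth p (h1 ▸ hth) h1.symm 2 3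
        · have h1 : Quotient.mk p (.inl a1) = Quotient.mk p (.inl b1) :=
            congrArg Prod.fst hab
          exact pairc p _ _ 2 h1
    | refl x => rfl
    | symm _ _ _ ih => exact ih.symm
    | trans _ _ _ _ _ ih1 ih2 => exact ih1.trans ih2
  · intro h
    replace h : Gmap p x = Gmap p y := h
    set S := Setoid.ker (hmap p) with hS
    have key : ∀ (a : Fin k) (a' : Fin k),
        Gmap p (.inl a) = Gmap p (.inr (.inr a')) →
        (bigS S S).r (.inl a) (.inr (.inr a')) := by
      intro a a' h
      obtain ⟨h1, hth⟩ := code_mix p (m := 1) (n := 2)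
        (by decide) (by decide) (by decide) h
      refine (bigS S S).iseqv.trans
        (gen_top S S (a := .inl a) (b := .inr a') (pairth p hth h1 1 2)) ?_
      exact gen_bot S S (a := .inl a') (b := .inr a') (pairth p (h1 ▸ hth) rfl 1 2)
    rcases x with a | (c | a) <;> rcases y with a' | (c' | a')
    · have h1 : Quotient.mk p (.inl a) = Quotient.mk p (.inl a') := congrArg Prod.fst h
      exact gen_top S S (a := .inl a) (b := .inl a') (pairc p _ _ 1 h1)
    · obtain ⟨h1, hth⟩ := code_mix p (m := 1) (n := 3)
        (by decide) (by decide) (by decide) h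
      exact gen_top S S (a := .inl a) (b := .inr c') (pairth p hth h1 1 2)
    · exact key a a' h
    · obtain ⟨h1, hth⟩ := code_mix p (m := 3) (n := 1)
        (by decide) (by decide) (by decide) h
      exact (bigS S S).iseqv.symm
        (gen_top S S (a := .inl a') (b := .inr c) (pairth p (h1 ▸ hth) h1.symm 1 2))
    · have h1 : Quotient.mk p (.inl c) = Quotient.mk p (.inl c') := congrArg Prod.fst h
      exact gen_bot S S (a := .inl c) (b := .inl c') (pairc p _ _ 1 h1)
    · obtain ⟨h1, hth⟩ := code_mix p (m := 3) (n := 2)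
        (by decide) (by decide) (by decide) h
      exact gen_bot S S (a := .inl c) (b := .inr a') (pairth p hth h1 1 2)
    · exact (bigS S S).iseqv.symm (key a' a h.symm)
    · obtain ⟨h1, hth⟩ := code_mix p (m := 2) (n := 3)
        (by decide) (by decide) (by decide) h
      exact (bigS S S).iseqv.symm
        (gen_bot S S (a := .inl c') (b := .inr a) (pairth p (h1 ▸ hth) h1.symm 1 2))
    · have h1 : Quotient.mk p (.inl a) = Quotient.mk p (.inl a') := congrArg Prod.fst h
      exact gen_bot S S (a := .inr a) (b := .inr a') (pairc p _ _ 2 h1)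

lemma comp_comp (p : PP k l) :
    compP (Setoid.ker (hmap p)) (Setoid.ker (hmap p)) = Setoid.ker (hmap p) := by
  have key : ∀ z : Fin k ⊕ Fin k, Gmap p (Sum.map id Sum.inr z) = hmap p z := by
    rintro (a | a) <;> rfl
  apply Setoid.ext
  intro x y
  show (bigS (Setoid.ker (hmap p)) (Setoid.ker (hmap p))).r
    (Sum.map id Sum.inr x) (Sum.map id Sum.inr y) ↔ _
  rw [bigS_hmap_eq p]
  show Gmap p (Sum.map id Sum.inr x) = Gmap p (Sum.map id Sum.inr y)
    ↔ hmap p x = hmap p y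
  rw [key, key]

lemma swap_ker (p : PP k l) : swapP (Setoid.ker (hmap p)) = Setoid.ker (hmap p) := by
  have key : ∀ x y : Fin k ⊕ Fin k,
      hmap p (Sum.swap x) = hmap p (Sum.swap y) → hmap p x = hmap p y := by
    rintro (a | a) (a' | a') h
    · have h1 : Quotient.mk p (.inl a) = Quotient.mk p (.inl a') := congrArg Prod.fst h
      exact pairc p _ _ 1 h1
    · obtain ⟨h1, hth⟩ := code_mix p (m := 2) (n := 1)
        (by decide) (by decide) (by decide) h
      exact pairth p hth h1 1 2
    · obtain ⟨h1, hth⟩ := code_mix p (m := 1) (n := 2)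
        (by decide) (by decide) (by decide) h
      exact pairth p hth h1 2 1
    · have h1 : Quotient.mk p (.inl a) = Quotient.mk p (.inl a') := congrArg Prod.fst h
      exact pairc p _ _ 2 h1
  apply Setoid.ext
  intro x y
  show hmap p (Sum.swap x) = hmap p (Sum.swap y) ↔ hmap p x = hmap p y
  constructor
  · exact key x y
  · intro h
    have h2 := key (Sum.swap x) (Sum.swap y)
    rw [Sum.swap_swap, Sum.swap_swap] at h2
    exact h2 h

end Aux


/-- for a building partition `p ∈ P_bp(k,l)`, `p*p` is projective with
`t(p*p) = l` and no loops are removed in the composition `p*p`. -/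
theorem building_swap_comp_projective {k l : ℕ} (p : PP k l) (hp : isBuilding p) :
    isProjective (compP (swapP p) p) ∧ tP (compP (swapP p) p) = l ∧ rlP (swapP p) p = 0 := by
  classical
  have hker := comp_swap_eq p
  refine ⟨⟨?_, ?_⟩, ?_, ?_⟩
  · rw [hker]; exact swap_ker p
  · rw [hker]; exact comp_comp p
  · rw [hker]
    have hf : ∀ b : Fin l, p.r (.inl ((hp.2.1 b).choose)) (.inr b) :=
      fun b => (hp.2.1 b).choose_spec
    set f : Fin l → Fin k := fun b => (hp.2.1 b).choose with hfdef
    have hth : ∀ b : Fin l, thP p (Quotient.mk p (.inl (f b))) :=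
      fun b => ⟨b, quotSound (p.iseqv.symm (hf b))⟩
    have hrel : ∀ b : Fin l,
        (Setoid.ker (hmap p)).r (Sum.inr (f b)) (Sum.inl (f b)) := by
      intro b
      show hmap p (Sum.inr (f b)) = hmap p (Sum.inl (f b))
      exact pairth p (hth b) rfl 2 1
    let e : Fin l → {c : Quotient (Setoid.ker (hmap p)) //
        (∃ a, Quotient.mk (Setoid.ker (hmap p)) (Sum.inl a) = c) ∧
        (∃ b : Fin k, Quotient.mk (Setoid.ker (hmap p)) (Sum.inr b) = c)} :=
      fun b => ⟨Quotient.mk (Setoid.ker (hmap p)) (Sum.inl (f b)),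
        ⟨f b, rfl⟩, ⟨f b, quotSound (hrel b)⟩⟩
    have einj : Function.Injective e := by
      intro b b' h
      have hval : Quotient.mk (Setoid.ker (hmap p)) (Sum.inl (f b))
          = Quotient.mk (Setoid.ker (hmap p)) (Sum.inl (f b')) := congrArg Subtype.val h
      have h2 : hmap p (Sum.inl (f b)) = hmap p (Sum.inl (f b')) := quotExact hval
      have h1 : Quotient.mk p (Sum.inl (f b)) = Quotient.mk p (Sum.inl (f b')) :=
        congrArg Prod.fst h2
      have hbb : Quotient.mk p (Sum.inr b) = Quotient.mk p (Sum.inr b') :=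
        (quotSound (p.iseqv.symm (hf b))).trans (h1.trans (quotSound (hf b')))
      exact hp.1 b b' (quotExact hbb)
    have esurj : Function.Surjective e := by
      rintro ⟨c, ⟨a, ha⟩, a', ha'⟩
      have h2 : hmap p (Sum.inl a) = hmap p (Sum.inr a') := quotExact (ha.trans ha'.symm)
      obtain ⟨h1, hthv⟩ := hmap_mix p h2
      obtain ⟨b, hb⟩ := hthv
      refine ⟨b, Subtype.ext ?_⟩
      show Quotient.mk (Setoid.ker (hmap p)) (Sum.inl (f b)) = c
      rw [← ha]
      apply quotSound
      show hmap p (Sum.inl (f b)) = hmap p (Sum.inl a)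
      exact pairc p _ _ 1 ((quotSound (hf b)).trans hb)
    have hcard := Nat.card_congr (Equiv.ofBijective e ⟨einj, esurj⟩)
    rw [tP, ← hcard]
    simp [Nat.card_eq_fintype_card]
  · have hE : IsEmpty {c : Quotient (bigS p (swapP p)) //
        ∀ x, Quotient.mk (bigS p (swapP p)) x = c → ∃ b : Fin l, x = Sum.inr (Sum.inl b)} := by
      constructor
      rintro ⟨c, hc⟩
      obtain ⟨x, rfl⟩ := Quotient.exists_rep c
      obtain ⟨b, rfl⟩ := hc x rfl
      obtain ⟨a, ha⟩ := hp.2.1 b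
      have hrel : (bigS p (swapP p)).r (Sum.inl a) (Sum.inr (Sum.inl b)) := by
        rw [bigS_swap_eq]
        show Fmap p (Sum.inl a) = Fmap p (Sum.inr (Sum.inl b))
        rw [Fmap_inl_of_th p ha]
        exact Prod.ext (quotSound ha) rfl
      obtain ⟨b', hb'⟩ := hc (Sum.inl a) (quotSound hrel)
      cases hb'
    rw [rlP]
    exact Nat.card_of_isEmpty
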